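/- Let Z ∈ ℝ^{n×m}, U ∈ ℝ^{n×k}, and V ∈ ℝ^{m×k} be real matrices such that Z = U Vᵀ. Then ‖Z‖_* ≤ (1/2)(‖U‖_F² + ‖V‖_F²). -/

import Mathlib

open Matrix

/-- The positive semidefinite square root of a positive semidefinite matrix
(the definition `Matrix.PosSemidef.sqrt` of the older Mathlib, since removed). -/
noncomputable def Matrix.PosSemidef.sqrt {n 𝕜 : Type*} [Fintype n] [DecidableEq n] [RCLike 𝕜]
    [PartialOrder 𝕜] {A : Matrix n n 𝕜} (hA : A.PosSemidef) : Matrix n n 𝕜 :=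
  hA.1.eigenvectorUnitary.1 * diagonal ((↑) ∘ (√·) ∘ hA.1.eigenvalues) *
  (star hA.1.eigenvectorUnitary : Matrix n n 𝕜)

/-- The nuclear norm of a real matrix: the trace of the positive-semidefinite
square root of `Xᵀ * X` (i.e. the sum of the singular values of `X`). -/
noncomputable def nuclearNorm {n m : ℕ} (X : Matrix (Fin n) (Fin m) ℝ) : ℝ :=
  ((Matrix.posSemidef_conjTranspose_mul_self X).sqrt).trace

/-- Bessel-type inequality for a sub-orthonormal family, by hand. -/
lemma bessel_aux {N n : ℕ} (p : Fin N → (Fin n → ℝ))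
    (hortho : ∀ i j, i ≠ j → p i ⬝ᵥ p j = 0)
    (hnorm : ∀ i, p i ⬝ᵥ p i ≤ 1)
    (u : Fin n → ℝ) : ∑ i, (p i ⬝ᵥ u) ^ 2 ≤ u ⬝ᵥ u := by
  set c : Fin N → ℝ := fun i => p i ⬝ᵥ u with hc
  have hw : (0:ℝ) ≤ (u - ∑ i, c i • p i) ⬝ᵥ (u - ∑ i, c i • p i) :=
    Finset.sum_nonneg fun i _ => mul_self_nonneg _
  have hexp : (u - ∑ i, c i • p i) ⬝ᵥ (u - ∑ i, c i • p i)
      = u ⬝ᵥ u - 2 * ∑ i, c i ^ 2 + ∑ i, c i ^ 2 * (p i ⬝ᵥ p i) := by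
    have hdsum : ∀ (x : Fin n → ℝ) (f : Fin N → Fin n → ℝ),
        x ⬝ᵥ (∑ i, f i) = ∑ i, x ⬝ᵥ f i := by
      intro x f
      simp only [dotProduct, Finset.sum_apply, Finset.mul_sum]
      exact Finset.sum_comm
    have hsumd : ∀ (x : Fin n → ℝ) (f : Fin N → Fin n → ℝ),
        (∑ i, f i) ⬝ᵥ x = ∑ i, f i ⬝ᵥ x := by
      intro x f
      rw [dotProduct_comm, hdsum]
      exact Finset.sum_congr rfl fun i _ => dotProduct_comm _ _
    have h1 : u ⬝ᵥ (∑ i, c i • p i) = ∑ i, c i ^ 2 := by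
      rw [hdsum]
      refine Finset.sum_congr rfl fun i _ => ?_
      rw [dotProduct_smul, dotProduct_comm]
      simp [hc]; ring
    have h2 : (∑ i, c i • p i) ⬝ᵥ u = ∑ i, c i ^ 2 := by
      rw [dotProduct_comm]; exact h1
    have h3 : (∑ i, c i • p i) ⬝ᵥ (∑ i, c i • p i) = ∑ i, c i ^ 2 * (p i ⬝ᵥ p i) := by
      rw [hsumd]
      refine Finset.sum_congr rfl fun i _ => ?_
      rw [smul_dotProduct, hdsum]
      have : ∀ j, p i ⬝ᵥ c j • p j = c j * (p i ⬝ᵥ p j) := fun j => by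
        rw [dotProduct_smul]; simp [mul_comm]
      simp_rw [this]
      rw [Finset.sum_eq_single i]
      · simp; ring
      · intro j _ hj; rw [hortho i j (Ne.symm hj)]; ring
      · simp
    rw [sub_dotProduct, dotProduct_sub, dotProduct_sub, h1, h2, h3]
    ring
  have hle : ∑ i, c i ^ 2 * (p i ⬝ᵥ p i) ≤ ∑ i, c i ^ 2 :=
    Finset.sum_le_sum fun i _ => by
      calc c i ^ 2 * (p i ⬝ᵥ p i) ≤ c i ^ 2 * 1 :=
            mul_le_mul_of_nonneg_left (hnorm i) (sq_nonneg _)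
        _ = c i ^ 2 := mul_one _
  nlinarith [hw, hexp, hle]

/-- Young-type inequality for dot products. -/
lemma dot_le_half {n : ℕ} (a b : Fin n → ℝ) :
    a ⬝ᵥ b ≤ (1 / 2) * (a ⬝ᵥ a + b ⬝ᵥ b) := by
  have h : (0:ℝ) ≤ (a - b) ⬝ᵥ (a - b) := Finset.sum_nonneg fun i _ => mul_self_nonneg _
  have : (a - b) ⬝ᵥ (a - b) = a ⬝ᵥ a - 2 * (a ⬝ᵥ b) + b ⬝ᵥ b := by
    rw [sub_dotProduct, dotProduct_sub, dotProduct_sub, dotProduct_comm b a]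
    ring
  linarith [h.trans_eq this]

/-- For any factorization `Z = U Vᵀ`, the nuclear norm of `Z` is at most
`(1/2)(‖U‖_F² + ‖V‖_F²)`. -/
theorem nuclearNorm_le_half_frobenius {n m k : ℕ}
    (Z : Matrix (Fin n) (Fin m) ℝ)
    (U : Matrix (Fin n) (Fin k) ℝ) (V : Matrix (Fin m) (Fin k) ℝ)
    (hZ : Z = U * Vᵀ) :
    nuclearNorm Z ≤ (1 / 2) * ((Uᵀ * U).trace + (Vᵀ * V).trace) := by
  classical
  set hA := Matrix.posSemidef_conjTranspose_mul_self Z with hhA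
  have hct : Zᴴ = Zᵀ := by ext i j; simp [conjTranspose_apply]
  set lam : Fin m → ℝ := hA.1.eigenvalues with hlam
  have hlam0 : ∀ i, 0 ≤ lam i := fun i => hA.eigenvalues_nonneg i
  set q : Fin m → (Fin m → ℝ) := fun i => ⇑(hA.1.eigenvectorBasis i) with hqdef
  set σ : Fin m → ℝ := fun i => Real.sqrt (lam i) with hσ
  -- trace of sqrt is the sum of square roots of eigenvalues
  have htrace : nuclearNorm Z = ∑ i, σ i := by
    rw [nuclearNorm, Matrix.PosSemidef.sqrt, Matrix.trace_mul_cycle]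
    have : (star (hA.1.eigenvectorUnitary : Matrix (Fin m) (Fin m) ℝ)) *
        (hA.1.eigenvectorUnitary : Matrix (Fin m) (Fin m) ℝ) = 1 := by
      exact Unitary.coe_star_mul_self hA.1.eigenvectorUnitary
    rw [this, Matrix.one_mul, Matrix.trace_diagonal]
    simp [hσ, hlam, Function.comp]
  -- orthonormality of eigenvectors, as dot products
  have hq : ∀ i j, q i ⬝ᵥ q j = if i = j then (1:ℝ) else 0 := by
    intro i j
    have := orthonormal_iff_ite.mp hA.1.eigenvectorBasis.orthonormal i j
    simpa [hqdef, PiLp.inner_apply, RCLike.inner_apply, dotProduct, starRingEnd_apply, mul_comm] using this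
  -- eigenvector equation
  have hAq : ∀ i, (Zᴴ * Z) *ᵥ q i = lam i • q i := fun i => hA.1.mulVec_eigenvectorBasis i
  -- dot products of images under Z
  have hZZ : ∀ x y : Fin m → ℝ, (Z *ᵥ x) ⬝ᵥ (Z *ᵥ y) = x ⬝ᵥ ((Zᴴ * Z) *ᵥ y) := by
    intro x y
    rw [hct, ← Matrix.mulVec_mulVec, Matrix.dotProduct_mulVec x, Matrix.vecMul_transpose]
  have hZq : ∀ i j, (Z *ᵥ q i) ⬝ᵥ (Z *ᵥ q j) = lam j * (if i = j then (1:ℝ) else 0) := by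
    intro i j
    rw [hZZ, hAq, dotProduct_smul, hq]
    simp [smul_eq_mul]
  -- the left singular vectors (or zero)
  set p : Fin m → (Fin n → ℝ) := fun i =>
    if σ i = 0 then 0 else (σ i)⁻¹ • (Z *ᵥ q i) with hpdef
  have hσsq : ∀ i, σ i * σ i = lam i := fun i => Real.mul_self_sqrt (hlam0 i)
  have hZq0 : ∀ i, σ i = 0 → Z *ᵥ q i = 0 := by
    intro i h
    have : (Z *ᵥ q i) ⬝ᵥ (Z *ᵥ q i) = 0 := by
      rw [hZq i i]; simp [← hσsq i, h]
    exact dotProduct_self_eq_zero.mp this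
  have hσp : ∀ i, σ i • p i = Z *ᵥ q i := by
    intro i
    by_cases h : σ i = 0
    · simp [hpdef, h, hZq0 i h]
    · simp [hpdef, h, smul_smul, mul_inv_cancel₀ h]
  have hpp : ∀ i j, p i ⬝ᵥ p j = if i = j then (if σ i = 0 then 0 else 1) else 0 := by
    intro i j
    by_cases hi : σ i = 0
    · simp [hpdef, hi, zero_dotProduct]
    by_cases hj : σ j = 0
    · have hij : i ≠ j := fun h => hi (h ▸ hj)
      simp [hpdef, hi, hj, dotProduct_zero, hij]
    · simp only [hpdef, if_neg hi, if_neg hj, smul_dotProduct, dotProduct_smul]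
      rw [hZq i j]
      by_cases hij : i = j
      · subst hij
        simp only [if_pos rfl, hi, mul_one, if_neg hi]
        simp only [if_pos trivial, smul_eq_mul, mul_one, ← hσsq i]
        field_simp
      · simp [hij]
  -- the key identity: σ i = pᵢ ⬝ (Z qᵢ)
  have hkey : ∀ i, σ i = p i ⬝ᵥ (Z *ᵥ q i) := by
    intro i
    rw [← hσp i, dotProduct_smul, hpp i i]
    by_cases h : σ i = 0 <;> simp [h]
  -- per-index bound
  have hbound : ∀ i, σ i ≤ (1/2) * ((Uᵀ *ᵥ p i) ⬝ᵥ (Uᵀ *ᵥ p i) + (Vᵀ *ᵥ q i) ⬝ᵥ (Vᵀ *ᵥ q i)) := by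
    intro i
    rw [hkey i, hZ, ← Matrix.mulVec_mulVec, Matrix.dotProduct_mulVec (p i), ← Matrix.mulVec_transpose U]
    exact dot_le_half _ _
  -- rewrite the transposed mulVec dot products as sums over columns
  have hswapU : ∀ (W : Matrix (Fin n) (Fin k) ℝ) (x : Fin n → ℝ),
      (Wᵀ *ᵥ x) ⬝ᵥ (Wᵀ *ᵥ x) = ∑ j, (x ⬝ᵥ (fun a => W a j)) ^ 2 := by
    intro W x
    simp only [dotProduct, mulVec, transpose_apply, sq]
    refine Finset.sum_congr rfl fun j _ => ?_
    congr 1 <;> exact Finset.sum_congr rfl fun a _ => mul_comm _ _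
  have hswapV : ∀ (W : Matrix (Fin m) (Fin k) ℝ) (x : Fin m → ℝ),
      (Wᵀ *ᵥ x) ⬝ᵥ (Wᵀ *ᵥ x) = ∑ j, (x ⬝ᵥ (fun a => W a j)) ^ 2 := by
    intro W x
    simp only [dotProduct, mulVec, transpose_apply, sq]
    refine Finset.sum_congr rfl fun j _ => ?_
    congr 1 <;> exact Finset.sum_congr rfl fun a _ => mul_comm _ _
  -- Bessel for p
  have hU : ∑ i, (Uᵀ *ᵥ p i) ⬝ᵥ (Uᵀ *ᵥ p i) ≤ (Uᵀ * U).trace := by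
    have htr : (Uᵀ * U).trace = ∑ j, (fun a => U a j) ⬝ᵥ (fun a => U a j) := by
      simp [Matrix.trace, Matrix.diag, Matrix.mul_apply, dotProduct]
    simp_rw [hswapU U]
    rw [Finset.sum_comm, htr]
    refine Finset.sum_le_sum fun j _ => ?_
    exact bessel_aux p
      (fun a b hab => by rw [hpp a b]; simp [hab])
      (fun a => by rw [hpp a a, if_pos rfl]; split <;> norm_num) _
  have hV : ∑ i, (Vᵀ *ᵥ q i) ⬝ᵥ (Vᵀ *ᵥ q i) ≤ (Vᵀ * V).trace := by
    have htr : (Vᵀ * V).trace = ∑ j, (fun a => V a j) ⬝ᵥ (fun a => V a j) := by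
      simp [Matrix.trace, Matrix.diag, Matrix.mul_apply, dotProduct]
    simp_rw [hswapV V]
    rw [Finset.sum_comm, htr]
    refine Finset.sum_le_sum fun j _ => ?_
    exact bessel_aux q
      (fun a b hab => by rw [hq a b]; simp [hab])
      (fun a => by rw [hq a a]; simp) _
  calc nuclearNorm Z = ∑ i, σ i := htrace
    _ ≤ ∑ i, (1/2) * ((Uᵀ *ᵥ p i) ⬝ᵥ (Uᵀ *ᵥ p i) + (Vᵀ *ᵥ q i) ⬝ᵥ (Vᵀ *ᵥ q i)) :=
        Finset.sum_le_sum fun i _ => hbound i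
    _ = (1/2) * (∑ i, (Uᵀ *ᵥ p i) ⬝ᵥ (Uᵀ *ᵥ p i) + ∑ i, (Vᵀ *ᵥ q i) ⬝ᵥ (Vᵀ *ᵥ q i)) := by
        rw [← Finset.sum_add_distrib, Finset.mul_sum]
    _ ≤ (1/2) * ((Uᵀ * U).trace + (Vᵀ * V).trace) := by
        have := add_le_add hU hV
        linarith
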